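/- Module contraction preserves the selected behavior: if Z is a decision structure with node labels given by actions, H is a module of Z, and Z/H is the contraction of H to a single node labelled by the derived action (H_B, H_R) of the sub-structure Z[H], then for every state w the action behavior selected satisfies Z_B(w) = (Z/H)_B(w). -/
import Mathlib


/-- A labelled directed graph given by a partial out-arc map: `out v r` is the head of
the `r`-labelled arc out of `v`, if it exists.  (This encoding automatically ensures that
all arcs out of a given node have distinct labels.) -/
structure DGraph (V R : Type) where
  out : V → R → Option V

namespace DGraph

variable {V R : Type}

/-- `v` has an arc to `w` (with some label). -/
def Adj (Z : DGraph V R) (v w : V) : Prop := ∃ r, Z.out v r = some w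

/-- A source: a node that is the head of no arc. -/
def IsSource (Z : DGraph V R) (s : V) : Prop := ∀ v r, Z.out v r ≠ some s

/-- A sink: a node that is the tail of no arc. -/
def IsSink (Z : DGraph V R) (v : V) : Prop := ∀ r, Z.out v r = none

/-- `Z` is a decision structure: no parallel arcs (distinct labels out of a node have
distinct heads, so labelled arcs correspond to graph arcs), acyclic, unique source. -/
def IsDS (Z : DGraph V R) : Prop :=
  (∀ v r₁ r₂ w, Z.out v r₁ = some w → Z.out v r₂ = some w → r₁ = r₂) ∧
  (∀ v, ¬ Relation.TransGen Z.Adj v v) ∧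
  (∃! s, Z.IsSource s)

/-- Adjacency within the induced subgraph on `X`. -/
def AdjOn (Z : DGraph V R) (X : Set V) (v w : V) : Prop :=
  v ∈ X ∧ w ∈ X ∧ Z.Adj v w

/-- `s` is a source of the subgraph induced by `X`: it is in `X` and receives no arc
from a node of `X`. -/
def IsSourceOn (Z : DGraph V R) (X : Set V) (s : V) : Prop :=
  s ∈ X ∧ ∀ v ∈ X, ∀ r, Z.out v r ≠ some s

/-- The subgraph induced by `X` is a decision structure: acyclic with a unique source. -/
def IsDSOn (Z : DGraph V R) (X : Set V) : Prop :=
  (∀ v, ¬ Relation.TransGen (Z.AdjOn X) v v) ∧ (∃! s, Z.IsSourceOn X s)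

/-- `X` is a module of `Z`: the induced subgraph is a decision structure, every arc from
outside `X` into `X` goes to the source of `X`, and whenever an `r`-labelled arc leaves
`X` towards `v`, every node of `X` has an `r`-labelled out-arc going either to `v` or to
another node of `X`. -/
def IsModule (Z : DGraph V R) (X : Set V) : Prop :=
  Z.IsDSOn X ∧
  (∀ v, v ∉ X → ∀ r w, Z.out v r = some w → w ∈ X → Z.IsSourceOn X w) ∧
  (∀ x ∈ X, ∀ r v, Z.out x r = some v → v ∉ X →
      ∀ y ∈ X, ∃ u, Z.out y r = some u ∧ (u = v ∨ u ∈ X))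

end DGraph

namespace DGraph

variable {V R : Type}

open Classical in
/-- The induced subgraph `Z[X]`: only arcs with both endpoints in `X` are kept. -/
noncomputable def induce (Z : DGraph V R) (X : Set V) : DGraph V R :=
  ⟨fun v r =>
    match Z.out v r with
    | some w => if v ∈ X ∧ w ∈ X then some w else none
    | none => none⟩

end DGraph

namespace DGraph

variable {V R : Type}

/-- `Reaches Z ret v x`: starting at `v` and repeatedly following the out-arc labelled
by the current node's return value (given by `ret`), one reaches `x`. -/
inductive Reaches (Z : DGraph V R) (ret : V → R) : V → V → Prop
  | refl (v : V) : Reaches Z ret v v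
  | step {v w x : V} : Z.out v (ret v) = some w → Reaches Z ret w x → Reaches Z ret v x

/-- `x` is the node selected by the decision structure `Z` under the return-value
assignment `ret`: it is reached from the source and its return value matches no out-arc. -/
def SelectsFrom (Z : DGraph V R) (ret : V → R) (x : V) : Prop :=
  ∃ s, Z.IsSource s ∧ Z.Reaches ret s x ∧ Z.out x (ret x) = none

end DGraph

namespace DGraph

variable {V R : Type}

/-- `x` is the node selected within the substructure `Z[X]` under the return assignment
`ret`: reached from the source of `X` along internal arcs, and its return value matches
no internal out-arc. -/
def SelectsIn (Z : DGraph V R) (X : Set V) (ret : V → R) (x : V) : Prop :=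
  ∃ s, Z.IsSourceOn X s ∧ (Z.induce X).Reaches ret s x ∧
    (Z.induce X).out x (ret x) = none

end DGraph

/-- An action: a behavior `b` (producing a signal in `S` from a state in `W`) together
with a return-value function `ret : W → R`. -/
structure Act (W S R : Type) where
  b : W → S
  ret : W → R

namespace DGraph

variable {V R : Type}

lemma induce_out_some {Z : DGraph V R} {X : Set V} {v : V} {r : R} {u : V}
    (h : Z.out v r = some u) (hv : v ∈ X) (hu : u ∈ X) :
    (Z.induce X).out v r = some u := by
  simp only [induce, h]
  rw [if_pos ⟨hv, hu⟩]

lemma induce_out_none_of_none {Z : DGraph V R} {X : Set V} {v : V} {r : R}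
    (h : Z.out v r = none) : (Z.induce X).out v r = none := by
  simp only [induce, h]

lemma induce_out_none_of_exit {Z : DGraph V R} {X : Set V} {v : V} {r : R} {u : V}
    (h : Z.out v r = some u) (hu : u ∉ X) : (Z.induce X).out v r = none := by
  simp only [induce, h]
  rw [if_neg (fun hc => hu hc.2)]

lemma induce_out_mem {Z : DGraph V R} {X : Set V} {v : V} {r : R} {u : V}
    (h : (Z.induce X).out v r = some u) : u ∈ X := by
  cases hz : Z.out v r with
  | none => rw [induce_out_none_of_none hz] at h; cases h
  | some a =>
    by_cases hm : v ∈ X ∧ a ∈ X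
    · rw [induce_out_some hz hm.1 hm.2] at h
      injection h with h; subst h; exact hm.2
    · have hn : (Z.induce X).out v r = none := by
        simp only [induce, hz]; rw [if_neg hm]
      rw [hn] at h; cases h

lemma induce_reaches_mem {Z : DGraph V R} {X : Set V} {ret : V → R} {a b : V}
    (h : (Z.induce X).Reaches ret a b) (ha : a ∈ X) : b ∈ X := by
  induction h with
  | refl v => exact ha
  | step h1 _ ih => exact ih (induce_out_mem h1)

/-- Determinism of selection: two terminal nodes reached from the same start coincide. -/
lemma reaches_det {Z : DGraph V R} {ret : V → R} {a b : V}
    (h : Z.Reaches ret a b) (hb : Z.out b (ret b) = none) :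
    ∀ c, Z.Reaches ret a c → Z.out c (ret c) = none → b = c := by
  induction h with
  | refl v =>
    intro c hc _
    cases hc with
    | refl => rfl
    | step h1 _ => rw [hb] at h1; cases h1
  | step h1 h2 ih =>
    intro c hc hcn
    cases hc with
    | refl => rw [hcn] at h1; cases h1
    | step h1' h2' =>
      have he : _ = _ := h1.symm.trans h1'
      injection he with he
      subst he
      exact ih hb c h2' hcn

/-- Transitivity of `Reaches`. -/
lemma reaches_trans {Z : DGraph V R} {ret : V → R} {a b c : V}
    (h : Z.Reaches ret a b) (h' : Z.Reaches ret b c) : Z.Reaches ret a c := by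
  induction h with
  | refl v => exact h'
  | step h1 _ ih => exact .step h1 (ih h')

end DGraph

open Classical in
/-- Projection of a node of `Z` to a node of the contraction `Z/H`. -/
noncomputable def ctrProj {V : Type} (H : Set V) (a : V) : {v : V // v ∉ H} ⊕ Unit :=
  if h : a ∈ H then Sum.inr () else Sum.inl ⟨a, h⟩

lemma ctrProj_pos {V : Type} {H : Set V} {a : V} (h : a ∈ H) :
    ctrProj H a = Sum.inr () := by simp [ctrProj, h]

lemma ctrProj_neg {V : Type} {H : Set V} {a : V} (h : a ∉ H) :
    ctrProj H a = Sum.inl ⟨a, h⟩ := by simp [ctrProj, h]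

/-- Module contraction preserves the selected behavior: if `H` is a
module of an action-labelled decision structure `Z` and `Z'` is the contraction of `H`
to a single node labelled by the derived action `(H_B, H_R)` of `Z[H]`, then for every
state `w` the behaviors selected by `Z` and `Z'` coincide: `Z_B(w) = (Z/H)_B(w)`. -/
theorem stmt_15 {V R W S : Type} [Fintype V] (Z : DGraph V R) (hZ : Z.IsDS)
    (H : Set V) (hH : Z.IsModule H) (lab : V → Act W S R)
    (Z' : DGraph ({v : V // v ∉ H} ⊕ Unit) R)
    -- `Z'` is the module contraction `Z/H` :
    (hout1 : ∀ (v : {v : V // v ∉ H}) (r : R) (w : V) (hw : w ∉ H),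
      Z.out v.1 r = some w → Z'.out (Sum.inl v) r = some (Sum.inl ⟨w, hw⟩))
    (hout2 : ∀ (v : {v : V // v ∉ H}) (r : R) (w : V),
      Z.out v.1 r = some w → w ∈ H → Z'.out (Sum.inl v) r = some (Sum.inr ()))
    (hout3 : ∀ (v : {v : V // v ∉ H}) (r : R),
      Z.out v.1 r = none → Z'.out (Sum.inl v) r = none)
    (hout4 : ∀ (r : R) (w : V) (hw : w ∉ H),
      (∃ x ∈ H, Z.out x r = some w) → Z'.out (Sum.inr ()) r = some (Sum.inl ⟨w, hw⟩))
    (hout5 : ∀ r : R, (¬ ∃ x ∈ H, ∃ w, w ∉ H ∧ Z.out x r = some w) →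
      Z'.out (Sum.inr ()) r = none)
    -- labels of `Z/H` : unchanged off `H`, and the contracted node carries the derived
    -- action `(H_B, H_R)` of the substructure `Z[H]` :
    (lab' : ({v : V // v ∉ H} ⊕ Unit) → Act W S R)
    (hlab1 : ∀ v : {v : V // v ∉ H}, lab' (Sum.inl v) = lab v.1)
    (hlab2 : ∀ (w : W) (x : V), Z.SelectsIn H (fun u => (lab u).ret w) x →
      (lab' (Sum.inr ())).b w = (lab x).b w ∧
      (lab' (Sum.inr ())).ret w = (lab x).ret w) :
    ∀ (w : W) (x : V) (y : {v : V // v ∉ H} ⊕ Unit),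
      Z.SelectsFrom (fun u => (lab u).ret w) x →
      Z'.SelectsFrom (fun u => (lab' u).ret w) y →
      (lab' y).b w = (lab x).b w := by
  classical
  intro w x y hx hy
  set ret : V → R := fun u => (lab u).ret w with hret
  set ret' : ({v : V // v ∉ H} ⊕ Unit) → R := fun u => (lab' u).ret w with hret'
  obtain ⟨s, hs, hsx, hxnone⟩ := hx
  obtain ⟨s', hs', hs'y, hynone⟩ := hy
  -- `ret'` agrees with `ret` off `H`
  have hretl : ∀ v : {v : V // v ∉ H}, ret' (Sum.inl v) = ret v.1 := by
    intro v; simp only [hret', hret, hlab1]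
  -- key simulation lemma
  have key : ∀ (v xx : V), Z.Reaches ret v xx → Z.out xx (ret xx) = none →
      ((∀ hv : v ∉ H, Z'.Reaches ret' (Sum.inl ⟨v, hv⟩) (ctrProj H xx) ∧
        (xx ∈ H → Z.SelectsIn H ret xx)) ∧
       (v ∈ H → ∃ z, (Z.induce H).Reaches ret v z ∧
          (Z.induce H).out z (ret z) = none ∧
          ((xx ∈ H ∧ z = xx) ∨ ∃ u, ∃ hu : u ∉ H, Z.out z (ret z) = some u ∧
            Z'.Reaches ret' (Sum.inl ⟨u, hu⟩) (ctrProj H xx) ∧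
            (xx ∈ H → Z.SelectsIn H ret xx)))) := by
    intro v xx hvx
    induction hvx with
    | refl v =>
      intro hnone
      constructor
      · intro hv
        refine ⟨?_, fun hmem => absurd hmem hv⟩
        rw [ctrProj_neg hv]
        exact .refl _
      · intro hv
        exact ⟨v, .refl _, DGraph.induce_out_none_of_none hnone,
          Or.inl ⟨hv, rfl⟩⟩
    | @step v u xx h1 h2 ih =>
      intro hnone
      have ih := ih hnone
      constructor
      · -- v ∉ H
        intro hv
        by_cases hu : u ∈ H
        · -- entering the module at `u`, which is its source
          have husrc : Z.IsSourceOn H u := hH.2.1 v hv (ret v) u h1 hu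
          obtain ⟨z, hz1, hz2, hz3⟩ := ih.2 hu
          have hstep1 : Z'.out (Sum.inl ⟨v, hv⟩) (ret' (Sum.inl ⟨v, hv⟩)) =
              some (Sum.inr ()) := by
            rw [hretl]; exact hout2 ⟨v, hv⟩ (ret v) u h1 hu
          have hselz : Z.SelectsIn H ret z := ⟨u, husrc, hz1, hz2⟩
          have hretr : ret' (Sum.inr ()) = ret z := (hlab2 w z hselz).2
          rcases hz3 with ⟨hxxH, rfl⟩ | ⟨u', hu', hzu', hpath, hsel⟩
          · refine ⟨?_, fun _ => hselz⟩
            rw [ctrProj_pos hxxH]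
            exact .step hstep1 (.refl _)
          · refine ⟨?_, hsel⟩
            have hstep2 : Z'.out (Sum.inr ()) (ret' (Sum.inr ())) =
                some (Sum.inl ⟨u', hu'⟩) := by
              rw [hretr]
              exact hout4 (ret z) u' hu' ⟨z, DGraph.induce_reaches_mem hz1 hu, hzu'⟩
            exact .step hstep1 (.step hstep2 hpath)
        · -- staying outside `H`
          have hstep1 : Z'.out (Sum.inl ⟨v, hv⟩) (ret' (Sum.inl ⟨v, hv⟩)) =
              some (Sum.inl ⟨u, hu⟩) := by
            rw [hretl]; exact hout1 ⟨v, hv⟩ (ret v) u hu h1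
          obtain ⟨hp, hsel⟩ := ih.1 hu
          exact ⟨.step hstep1 hp, hsel⟩
      · -- v ∈ H
        intro hv
        by_cases hu : u ∈ H
        · obtain ⟨z, hz1, hz2, hz3⟩ := ih.2 hu
          exact ⟨z, .step (DGraph.induce_out_some h1 hv hu) hz1, hz2, hz3⟩
        · obtain ⟨hp, hsel⟩ := ih.1 hu
          exact ⟨v, .refl _, DGraph.induce_out_none_of_exit h1 hu,
            Or.inr ⟨u, hu, h1, hp, hsel⟩⟩
  -- any source of `Z'` is the projection of the source of `Z`
  have hsrc_eq : ∀ t, Z'.IsSource t → t = ctrProj H s := by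
    intro t ht
    match t with
    | Sum.inl ⟨v, hv⟩ =>
      have hvsrc : Z.IsSource v := by
        intro a r harc
        by_cases ha : a ∈ H
        · exact ht (Sum.inr ()) r (hout4 r v hv ⟨a, ha, harc⟩)
        · exact ht (Sum.inl ⟨a, ha⟩) r (hout1 ⟨a, ha⟩ r v hv harc)
      have : v = s := hZ.2.2.unique hvsrc hs
      subst this
      rw [ctrProj_neg hv]
    | Sum.inr () =>
      by_cases hsH : s ∈ H
      · rw [ctrProj_pos hsH]
      · exfalso
        obtain ⟨σ, hσ⟩ := hH.1.2.exists
        have hσns : ¬ Z.IsSource σ := fun hc => hsH (hZ.2.2.unique hs hc ▸ hσ.1)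
        simp only [DGraph.IsSource, not_forall, not_not] at hσns
        obtain ⟨a, r, harc⟩ := hσns
        by_cases ha : a ∈ H
        · exact hσ.2 a ha r harc
        · exact ht (Sum.inl ⟨a, ha⟩) r (hout2 ⟨a, ha⟩ r σ harc hσ.1)
  -- extract from `key` : `Z'` reaches `ctrProj H x` from `ctrProj H s`,
  -- and when `x ∈ H` the substructure selects `x`
  have main : Z'.Reaches ret' (ctrProj H s) (ctrProj H x) ∧
      (x ∈ H → Z.SelectsIn H ret x) := by
    have k := key s x hsx hxnone
    by_cases hsH : s ∈ H
    · have hssrc : Z.IsSourceOn H s := ⟨hsH, fun a _ r => hs a r⟩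
      obtain ⟨z, hz1, hz2, hz3⟩ := k.2 hsH
      have hselz : Z.SelectsIn H ret z := ⟨s, hssrc, hz1, hz2⟩
      rw [ctrProj_pos hsH]
      rcases hz3 with ⟨hxH, rfl⟩ | ⟨u, hu, hzu, hpath, hsel⟩
      · rw [ctrProj_pos hxH]
        exact ⟨.refl _, fun _ => hselz⟩
      · have hretr : ret' (Sum.inr ()) = ret z := (hlab2 w z hselz).2
        have hstep : Z'.out (Sum.inr ()) (ret' (Sum.inr ())) =
            some (Sum.inl ⟨u, hu⟩) := by
          rw [hretr]
          exact hout4 (ret z) u hu ⟨z, DGraph.induce_reaches_mem hz1 hsH, hzu⟩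
        exact ⟨.step hstep hpath, hsel⟩
    · rw [ctrProj_neg hsH]
      exact k.1 hsH
  -- terminality of `ctrProj H x` in `Z'`
  have hterm : Z'.out (ctrProj H x) (ret' (ctrProj H x)) = none := by
    by_cases hxH : x ∈ H
    · have hretr : ret' (Sum.inr ()) = ret x := (hlab2 w x (main.2 hxH)).2
      rw [ctrProj_pos hxH, hretr]
      apply hout5
      rintro ⟨a, ha, u, hu, harc⟩
      obtain ⟨u', hu'1, hu'2⟩ := hH.2.2 a ha (ret x) u harc hu x hxH
      rw [hxnone] at hu'1; cases hu'1
    · rw [ctrProj_neg hxH, hretl]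
      exact hout3 ⟨x, hxH⟩ (ret x) hxnone
  -- identify `y`
  have hs'eq : s' = ctrProj H s := hsrc_eq s' hs'
  rw [hs'eq] at hs'y
  have hyeq : ctrProj H x = y := DGraph.reaches_det main.1 hterm y hs'y hynone
  subst hyeq
  by_cases hxH : x ∈ H
  · rw [ctrProj_pos hxH]
    exact (hlab2 w x (main.2 hxH)).1
  · rw [ctrProj_neg hxH, hlab1]
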